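/- arXiv:2502.06746 — 3 statements merged into one kernel-verified Lean document; each statement's English description precedes it below -/
import Mathlib

section
/- Let X be a closed acausal subset of the pseudo-Euclidean space ℝ_{(l,p)}. Then for every point a ∈ X one has N(a) = closure(N'(a)). -/
open Filter Topology Set

noncomputable section

/-- The pseudo-Euclidean space `ℝ_{(l,p)}`: `ℝ^(l+p)` with the Euclidean topology. -/
abbrev PE (l p : ℕ) := EuclideanSpace ℝ (Fin (l + p))

/-- The quadratic form `Q(x) = ‖x‖_l² − ‖x‖_p²`. -/
def Q (l p : ℕ) (x : PE l p) : ℝ :=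
  ∑ i : Fin (l + p), if (i : ℕ) < l then (x i) ^ 2 else -((x i) ^ 2)

/-- The pseudo-scalar product `⟪x,y⟫ = Σ_{i<l} x_i y_i − Σ_{i≥l} x_i y_i`. -/
def pseudoInner (l p : ℕ) (x y : PE l p) : ℝ :=
  ∑ i : Fin (l + p), if (i : ℕ) < l then x i * y i else -(x i * y i)

/-- `‖x‖_l`: the Euclidean norm of the first `l` coordinates. -/
def normL (l p : ℕ) (x : PE l p) : ℝ :=
  Real.sqrt (∑ i : Fin (l + p), if (i : ℕ) < l then (x i) ^ 2 else 0)

/-- `‖x‖_p`: the Euclidean norm of the last `p` coordinates. -/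
def normP (l p : ℕ) (x : PE l p) : ℝ :=
  Real.sqrt (∑ i : Fin (l + p), if (i : ℕ) < l then 0 else (x i) ^ 2)

/-- `X` is acausal: `Q(x−y) > 0` for all distinct `x, y ∈ X`. -/
def Acausal (l p : ℕ) (X : Set (PE l p)) : Prop :=
  ∀ x ∈ X, ∀ y ∈ X, x ≠ y → 0 < Q l p (x - y)

/-- `X` is `L`-pseudo-Lipschitz: `L‖x−y‖_l ≥ ‖x−y‖_p` for all `x, y ∈ X`. -/
def PseudoLipschitz (l p : ℕ) (L : ℝ) (X : Set (PE l p)) : Prop :=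
  ∀ x ∈ X, ∀ y ∈ X, normP l p (x - y) ≤ L * normL l p (x - y)

/-- The squared-distance function `ρ(a,X) = inf {Q(x−a) : x ∈ X}`. -/
def rho (l p : ℕ) (X : Set (PE l p)) (a : PE l p) : ℝ :=
  sInf ((fun x => Q l p (x - a)) '' X)

/-- The set of closest points `m(a) = {x ∈ X : Q(x−a) = ρ(a,X)}`, via its equivalent
description `m(a) = {x ∈ X : ∀ b ∈ X, Q(x−a) ≤ Q(b−a)}`. -/
def mm (l p : ℕ) (X : Set (PE l p)) (a : PE l p) : Set (PE l p) :=
  {x ∈ X | ∀ b ∈ X, Q l p (x - a) ≤ Q l p (b - a)}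

/-- The medial axis `M_X`: points with at least two closest points in `X`. -/
def medialAxis (l p : ℕ) (X : Set (PE l p)) : Set (PE l p) :=
  {a | (mm l p X a).Nontrivial}

/-- The vacant axis `W_X`: points with no closest point in `X`. -/
def vacantAxis (l p : ℕ) (X : Set (PE l p)) : Set (PE l p) :=
  {a | mm l p X a = ∅}

/-- The normal set `N(a) = {x : a ∈ m(x)}`. -/
def NN (l p : ℕ) (X : Set (PE l p)) (a : PE l p) : Set (PE l p) :=
  {x | a ∈ mm l p X x}

/-- The strict normal set `N'(a) = {x : m(x) = {a}}`. -/
def NN' (l p : ℕ) (X : Set (PE l p)) (a : PE l p) : Set (PE l p) :=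
  {x | mm l p X x = {a}}

lemma key_expand (l p : ℕ) (u v : PE l p) (t : ℝ) :
    Q l p (u - t • v)
      = Q l p u - 2 * t * pseudoInner l p u v + t ^ 2 * Q l p v := by
  simp only [Q, pseudoInner]
  rw [Finset.mul_sum, Finset.mul_sum, ← Finset.sum_sub_distrib, ← Finset.sum_add_distrib]
  refine Finset.sum_congr rfl fun i _ => ?_
  have h : (u - t • v) i = u i - t * v i := rfl
  rw [h]; split_ifs <;> ring

lemma Q_zero (l p : ℕ) : Q l p (0 : PE l p) = 0 := by
  simp only [Q]
  refine Finset.sum_eq_zero fun i _ => ?_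
  have h : (0 : PE l p) i = 0 := rfl
  rw [h]; split_ifs <;> ring

lemma pseudoInner_zero (l p : ℕ) (v : PE l p) : pseudoInner l p (0 : PE l p) v = 0 := by
  simp only [pseudoInner]
  refine Finset.sum_eq_zero fun i _ => ?_
  have h : (0 : PE l p) i = 0 := rfl
  rw [h]; split_ifs <;> ring

lemma Q_cont (l p : ℕ) (c : PE l p) : Continuous fun x : PE l p => Q l p (c - x) := by
  unfold Q
  apply continuous_finset_sum
  intro i _
  have h : Continuous fun x : PE l p => (c - x) i := by
    have : (fun x : PE l p => (c - x) i) = fun x : PE l p => c i - x i := rfl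
    rw [this]
    exact continuous_const.sub (PiLp.continuous_apply 2 _ i)
  by_cases hi : (i : ℕ) < l <;> simp only [hi, if_true, if_false]
  · exact h.pow 2
  · exact (h.pow 2).neg

/-- For closed acausal `X` and every `a ∈ X`, `N(a) = closure (N'(a))`. -/
theorem normalSet_eq_closure_strictNormalSet (l p : ℕ) (hl : 1 ≤ l)
    (X : Set (PE l p)) (hX : IsClosed X) (hac : Acausal l p X) :
    ∀ a ∈ X, NN l p X a = closure (NN' l p X a) := by
  intro a ha
  apply Set.Subset.antisymm
  · -- N(a) ⊆ closure N'(a)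
    intro x hx
    obtain ⟨-, hmin⟩ : a ∈ X ∧ ∀ b ∈ X, Q l p (a - x) ≤ Q l p (b - x) := hx
    have hfc : Continuous (fun t : ℝ => a + t • (x - a)) :=
      continuous_const.add (continuous_id.smul continuous_const)
    -- key strict inequality
    have key : ∀ t : ℝ, 0 ≤ t → t < 1 → ∀ b ∈ X, b ≠ a →
        Q l p (a - (a + t • (x - a))) < Q l p (b - (a + t • (x - a))) := by
      intro t ht0 ht1 b hb hba
      have e1 : a - (a + t • (x - a)) = (0 : PE l p) - t • (x - a) := by module
      have e2 : b - (a + t • (x - a)) = (b - a) - t • (x - a) := by module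
      rw [e1, e2, key_expand, key_expand, Q_zero, pseudoInner_zero]
      have hD : 0 < Q l p (b - a) := hac b hb a ha hba
      have hS : 2 * pseudoInner l p (b - a) (x - a) ≤ Q l p (b - a) := by
        have h := hmin b hb
        have e3 : a - x = (0 : PE l p) - (1 : ℝ) • (x - a) := by module
        have e4 : b - x = (b - a) - (1 : ℝ) • (x - a) := by module
        rw [e3, e4, key_expand, key_expand, Q_zero, pseudoInner_zero] at h
        nlinarith [h]
      nlinarith [mul_nonneg ht0 (sub_nonneg.2 hS),
        mul_pos (sub_pos.2 ht1) hD]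
    have hsub : (fun t : ℝ => a + t • (x - a)) '' Set.Ico (0 : ℝ) 1 ⊆ NN' l p X a := by
      rintro _ ⟨t, ⟨ht0, ht1⟩, rfl⟩
      show mm l p X (a + t • (x - a)) = {a}
      have hamem : ∀ b ∈ X, Q l p (a - (a + t • (x - a))) ≤ Q l p (b - (a + t • (x - a))) := by
        intro b hb
        rcases eq_or_ne b a with hba | hba
        · rw [hba]
        · exact (key t ht0 ht1 b hb hba).le
      ext z
      simp only [mm, Set.mem_setOf_eq, Set.mem_singleton_iff]
      constructor
      · rintro ⟨hz, hzmin⟩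
        by_contra hne
        exact absurd (hzmin a ha) (not_le.2 (key t ht0 ht1 z hz hne))
      · intro hz
        subst hz
        exact ⟨ha, hamem⟩
    have hx1 : x ∈ (fun t : ℝ => a + t • (x - a)) '' closure (Set.Ico (0 : ℝ) 1) := by
      rw [closure_Ico (by norm_num : (0 : ℝ) ≠ 1)]
      refine ⟨1, ⟨zero_le_one, le_refl 1⟩, ?_⟩
      show a + (1 : ℝ) • (x - a) = x
      module
    have := image_closure_subset_closure_image hfc hx1
    exact closure_mono hsub this
  · -- closure N'(a) ⊆ N(a)
    have h1 : NN' l p X a ⊆ NN l p X a := by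
      intro x hx
      have hx' : mm l p X x = {a} := hx
      show a ∈ mm l p X x
      rw [hx']
      exact rfl
    have h2 : IsClosed (NN l p X a) := by
      have he : NN l p X a = ⋂ b ∈ X, {x | Q l p (a - x) ≤ Q l p (b - x)} := by
        ext x
        simp only [NN, mm, Set.mem_setOf_eq, Set.mem_sep_iff, Set.mem_iInter]
        exact ⟨fun h b hb => h.2 b hb, fun h => ⟨ha, h⟩⟩
      rw [he]
      exact isClosed_biInter fun b _ => isClosed_le (Q_cont l p a) (Q_cont l p b)
    exact closure_minimal h1 h2
end
end

section
/- Let X be a nonempty closed L-pseudo-Lipschitz subset of the pseudo-Euclidean space ℝ_{(l,p)} with L < 1. Then for every x ∈ ℝ^n \ M_X the set m(x) consists of a single point y, the function ρ(·,X) is differentiable at x, and its derivative is the linear map h ↦ 2⟪x − y, h⟫; equivalently ∇ρ(x) = 2A(x − m(x)), where A = diag(1,…,1,−1,…,−1) with l entries 1 and p entries −1. -/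
open Filter Topology Set

noncomputable section

/-- The linear map `A = diag(1,…,1,−1,…,−1)` (with `l` entries `1` and `p` entries `−1`). -/
def Amap (l p : ℕ) (x : PE l p) : PE l p :=
  (WithLp.equiv 2 (Fin (l + p) → ℝ)).symm (fun i => if (i : ℕ) < l then x i else -(x i))

variable {l p : ℕ}

lemma Q_add (u v : PE l p) : Q l p (u + v) = Q l p u + 2 * pseudoInner l p u v + Q l p v := by
  unfold Q pseudoInner
  rw [Finset.mul_sum, ← Finset.sum_add_distrib, ← Finset.sum_add_distrib]
  refine Finset.sum_congr rfl fun i _ => ?_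
  have : (u + v) i = u i + v i := rfl
  rw [this]
  split <;> ring

lemma Amap_apply (x : PE l p) (i : Fin (l+p)) : Amap l p x i = if (i:ℕ) < l then x i else -(x i) := rfl

lemma inner_Amap (u v : PE l p) : (inner ℝ (Amap l p u) v : ℝ) = pseudoInner l p u v := by
  rw [PiLp.inner_apply]
  unfold pseudoInner
  refine Finset.sum_congr rfl fun i _ => ?_
  rw [Amap_apply]
  simp [RCLike.inner_apply, mul_comm]

lemma norm_Amap (u : PE l p) : ‖Amap l p u‖ = ‖u‖ := by
  rw [EuclideanSpace.norm_eq, EuclideanSpace.norm_eq]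
  congr 1
  refine Finset.sum_congr rfl fun i _ => ?_
  rw [Amap_apply]
  split <;> simp

lemma abs_pseudoInner_le (u v : PE l p) : |pseudoInner l p u v| ≤ ‖u‖ * ‖v‖ := by
  rw [← inner_Amap, ← norm_Amap u]
  exact abs_real_inner_le_norm _ _

lemma continuous_Q : Continuous (Q l p) := by
  unfold Q
  refine continuous_finset_sum _ fun i _ => ?_
  split
  · exact ((continuous_apply i).comp (PiLp.continuous_ofLp 2 _)).pow 2
  · exact (((continuous_apply i).comp (PiLp.continuous_ofLp 2 _)).pow 2).neg

lemma pI_comm (u v : PE l p) : pseudoInner l p u v = pseudoInner l p v u := by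
  unfold pseudoInner
  refine Finset.sum_congr rfl fun i _ => ?_
  split <;> ring

lemma pI_add_left (u v w : PE l p) :
    pseudoInner l p (u + v) w = pseudoInner l p u w + pseudoInner l p v w := by
  unfold pseudoInner
  rw [← Finset.sum_add_distrib]
  refine Finset.sum_congr rfl fun i _ => ?_
  have : (u + v) i = u i + v i := rfl
  rw [this]; split <;> ring

lemma pI_neg_left (u w : PE l p) : pseudoInner l p (-u) w = -pseudoInner l p u w := by
  unfold pseudoInner
  rw [← Finset.sum_neg_distrib]
  refine Finset.sum_congr rfl fun i _ => ?_
  have : (-u) i = -(u i) := rfl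
  rw [this]; split <;> ring

lemma pI_sub_left (u v w : PE l p) :
    pseudoInner l p (u - v) w = pseudoInner l p u w - pseudoInner l p v w := by
  rw [sub_eq_add_neg, pI_add_left, pI_neg_left, sub_eq_add_neg]

lemma pI_self (u : PE l p) : pseudoInner l p u u = Q l p u := by
  unfold pseudoInner Q
  refine Finset.sum_congr rfl fun i _ => ?_
  split <;> ring

lemma pI_neg_neg (u v : PE l p) : pseudoInner l p (-u) (-v) = pseudoInner l p u v := by
  rw [pI_neg_left, pI_comm, pI_neg_left, pI_comm u v, neg_neg]

def sL (l p : ℕ) (u : PE l p) : ℝ := ∑ i : Fin (l+p), if (i:ℕ) < l then (u i)^2 else 0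
def sP (l p : ℕ) (u : PE l p) : ℝ := ∑ i : Fin (l+p), if (i:ℕ) < l then 0 else (u i)^2

lemma normL_eq (x : PE l p) : normL l p x = Real.sqrt (sL l p x) := rfl
lemma normP_eq (x : PE l p) : normP l p x = Real.sqrt (sP l p x) := rfl

lemma sL_nonneg (u : PE l p) : 0 ≤ sL l p u :=
  Finset.sum_nonneg fun i _ => by split <;> positivity

lemma sP_nonneg (u : PE l p) : 0 ≤ sP l p u :=
  Finset.sum_nonneg fun i _ => by split <;> positivity

lemma Q_eq_sub (u : PE l p) : Q l p u = sL l p u - sP l p u := by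
  unfold Q sL sP
  rw [← Finset.sum_sub_distrib]
  refine Finset.sum_congr rfl fun i _ => ?_
  split <;> ring

lemma norm_sq_eq_add (u : PE l p) : ‖u‖^2 = sL l p u + sP l p u := by
  have h1 : ‖u‖ = Real.sqrt (∑ i, ‖u i‖^2) := EuclideanSpace.norm_eq u
  have h2 : (∑ i : Fin (l+p), ‖u i‖^2) = sL l p u + sP l p u := by
    unfold sL sP
    rw [← Finset.sum_add_distrib]
    refine Finset.sum_congr rfl fun i _ => ?_
    rw [Real.norm_eq_abs, sq_abs]
    split <;> ring
  rw [h1, Real.sq_sqrt (by positivity), h2]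

lemma Q_le_norm_sq (u : PE l p) : Q l p u ≤ ‖u‖^2 := by
  rw [Q_eq_sub, norm_sq_eq_add]
  have := sP_nonneg (l := l) (p := p) u; linarith

lemma neg_norm_sq_le_Q (u : PE l p) : -‖u‖^2 ≤ Q l p u := by
  rw [Q_eq_sub, norm_sq_eq_add]
  have := sL_nonneg (l := l) (p := p) u; linarith



/-- Coercivity: for `x y ∈ X`, `c ‖x-y‖² ≤ Q (x-y)` where `c = (1-M²)/(1+M²)`, `M = max L 0`. -/
lemma Q_coercive {L : ℝ} {X : Set (PE l p)}
    (hlip : ∀ x ∈ X, ∀ y ∈ X, normP l p (x - y) ≤ L * normL l p (x - y)) (hL : L < 1)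
    {x y : PE l p} (hx : x ∈ X) (hy : y ∈ X) :
    (1 - (max L 0)^2) / (1 + (max L 0)^2) * ‖x - y‖^2 ≤ Q l p (x - y) := by
  set M := max L 0 with hM
  have hM0 : 0 ≤ M := le_max_right _ _
  have hM1 : M < 1 := max_lt hL one_pos
  set u := x - y
  have hs := sL_nonneg (l := l) (p := p) u
  have ht := sP_nonneg (l := l) (p := p) u
  have h1 : Real.sqrt (sP l p u) ≤ M * Real.sqrt (sL l p u) := by
    rw [← normP_eq, ← normL_eq]
    refine le_trans (hlip x hx y hy) ?_
    have : 0 ≤ Real.sqrt (sL l p u) := Real.sqrt_nonneg _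
    exact mul_le_mul_of_nonneg_right (le_max_left _ _) this
  have h2 : sP l p u ≤ M^2 * sL l p u := by
    have := mul_self_le_mul_self (Real.sqrt_nonneg (sP l p u)) h1
    rw [Real.mul_self_sqrt ht] at this
    calc sP l p u ≤ (M * Real.sqrt (sL l p u)) * (M * Real.sqrt (sL l p u)) := this
      _ = M^2 * (Real.sqrt (sL l p u) * Real.sqrt (sL l p u)) := by ring
      _ = M^2 * sL l p u := by rw [Real.mul_self_sqrt hs]
  have hden : 0 < 1 + M^2 := by positivity
  have hnum : 0 < 1 - M^2 := by nlinarith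
  rw [Q_eq_sub, norm_sq_eq_add]
  rw [div_mul_eq_mul_div, div_le_iff₀ hden]
  nlinarith [mul_nonneg (le_of_lt hnum) hs]



/-- Bound on sublevel points. -/
lemma sublevel_bound {c : ℝ} (hc : 0 < c) {X : Set (PE l p)}
    (hco : ∀ x ∈ X, ∀ y ∈ X, c * ‖x - y‖^2 ≤ Q l p (x - y))
    {x0 : PE l p} (hx0 : x0 ∈ X) (a : PE l p) {b : PE l p} (hb : b ∈ X)
    (hQ : Q l p (b - a) ≤ Q l p (x0 - a)) : ‖b - x0‖ ≤ 2 * ‖x0 - a‖ / c := by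
  have hdecomp : b - a = (b - x0) + (x0 - a) := by abel
  have hexp : Q l p (b - a) = Q l p (b - x0) + 2 * pseudoInner l p (b - x0) (x0 - a)
      + Q l p (x0 - a) := by rw [hdecomp, Q_add]
  have h1 : Q l p (b - x0) ≤ -(2 * pseudoInner l p (b - x0) (x0 - a)) := by linarith [hexp ▸ hQ]
  have h2 : -(2 * pseudoInner l p (b - x0) (x0 - a)) ≤ 2 * (‖b - x0‖ * ‖x0 - a‖) := by
    have := abs_pseudoInner_le (b - x0) (x0 - a)
    have := neg_abs_le (pseudoInner l p (b - x0) (x0 - a))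
    nlinarith [abs_nonneg (pseudoInner l p (b - x0) (x0 - a))]
  have h3 : c * ‖b - x0‖^2 ≤ 2 * (‖b - x0‖ * ‖x0 - a‖) := le_trans (le_trans (hco b hb x0 hx0) h1) h2
  rcases eq_or_lt_of_le (norm_nonneg (b - x0)) with h | h
  · rw [← h]; positivity
  · rw [le_div_iff₀ hc]
    nlinarith

/-- Existence of a closest point. -/
lemma mm_nonempty {c : ℝ} (hc : 0 < c) {X : Set (PE l p)} (hne : X.Nonempty) (hX : IsClosed X)
    (hco : ∀ x ∈ X, ∀ y ∈ X, c * ‖x - y‖^2 ≤ Q l p (x - y)) (a : PE l p) :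
    (mm l p X a).Nonempty := by
  obtain ⟨x0, hx0⟩ := hne
  set R := 2 * ‖x0 - a‖ / c with hR
  have hR0 : 0 ≤ R := by positivity
  set K := X ∩ Metric.closedBall x0 R with hK
  have hKc : IsCompact K := by
    have : Bornology.IsBounded K := Metric.isBounded_closedBall.subset (Set.inter_subset_right)
    exact Metric.isCompact_of_isClosed_isBounded (hX.inter Metric.isClosed_closedBall) this
  have hKne : K.Nonempty := ⟨x0, hx0, Metric.mem_closedBall_self hR0⟩
  have hcont : ContinuousOn (fun b => Q l p (b - a)) K :=
    (continuous_Q.comp (continuous_id.sub continuous_const)).continuousOn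
  obtain ⟨z, hzK, hz⟩ := hKc.exists_isMinOn hKne hcont
  refine ⟨z, hzK.1, fun b hb => ?_⟩
  rcases le_or_gt (Q l p (b - a)) (Q l p (x0 - a)) with h | h
  · have : b ∈ K := ⟨hb, by
      rw [Metric.mem_closedBall, dist_eq_norm]
      exact sublevel_bound hc hco hx0 a hb h⟩
    exact hz this
  · exact le_trans (hz ⟨hx0, Metric.mem_closedBall_self hR0⟩) (le_of_lt h)



lemma rho_eq_of_mem_mm {X : Set (PE l p)} {a z : PE l p} (hz : z ∈ mm l p X a) :
    rho l p X a = Q l p (z - a) := by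
  obtain ⟨hzX, hmin⟩ := hz
  refine le_antisymm ?_ ?_
  · exact csInf_le ⟨Q l p (z - a), fun q ⟨b, hb, hq⟩ => hq ▸ hmin b hb⟩ ⟨z, hzX, rfl⟩
  · exact le_csInf ⟨Q l p (z - a), z, hzX, rfl⟩ fun q ⟨b, hb, hq⟩ => hq ▸ hmin b hb

/-- Continuity of the closest point at a point of uniqueness. -/
lemma mm_continuity {c : ℝ} (hc : 0 < c) {X : Set (PE l p)} (hX : IsClosed X)
    (hco : ∀ x ∈ X, ∀ y ∈ X, c * ‖x - y‖^2 ≤ Q l p (x - y))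
    {x y : PE l p} (hxy : mm l p X x = {y}) :
    ∀ ε > 0, ∃ δ > 0, ∀ a : PE l p, dist a x < δ → ∀ b ∈ mm l p X a, dist b y < ε := by
  have hyX : y ∈ X := (show y ∈ mm l p X x by rw [hxy]; exact Set.mem_singleton y).1
  by_contra hcon
  push_neg at hcon
  obtain ⟨ε, hε, H⟩ := hcon
  have Hn : ∀ n : ℕ, ∃ a : PE l p, dist a x < 1/(n+1) ∧
      ∃ b, b ∈ mm l p X a ∧ ε ≤ dist b y := by
    intro n
    obtain ⟨a, ha, b, hb, hby⟩ := H (1/(n+1)) (by positivity)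
    exact ⟨a, ha, b, hb, hby⟩
  choose aa haa bb hbb hby using Hn
  set R := 2 * (‖y - x‖ + 1) / c with hR
  have hbmem : ∀ n, bb n ∈ X ∩ Metric.closedBall y R := by
    intro n
    refine ⟨(hbb n).1, ?_⟩
    rw [Metric.mem_closedBall, dist_eq_norm]
    have h1 : ‖bb n - y‖ ≤ 2 * ‖y - aa n‖ / c :=
      sublevel_bound hc hco hyX (aa n) (hbb n).1 ((hbb n).2 y hyX)
    have h2 : ‖y - aa n‖ ≤ ‖y - x‖ + 1 := by
      have : ‖aa n - x‖ < 1 := by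
        rw [← dist_eq_norm]
        calc dist (aa n) x < 1/(n+1) := haa n
          _ ≤ 1 := by rw [div_le_one (by positivity)]; linarith [Nat.cast_nonneg (α := ℝ) n]
      calc ‖y - aa n‖ = ‖(y - x) - (aa n - x)‖ := by congr 1; abel
        _ ≤ ‖y - x‖ + ‖aa n - x‖ := norm_sub_le _ _
        _ ≤ ‖y - x‖ + 1 := by linarith
    refine le_trans h1 ?_
    rw [hR]
    gcongr
  have hKc : IsCompact (X ∩ Metric.closedBall y R) :=
    Metric.isCompact_of_isClosed_isBounded (hX.inter Metric.isClosed_closedBall)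
      (Metric.isBounded_closedBall.subset Set.inter_subset_right)
  obtain ⟨bs, hbsK, φ, hφ, hconv⟩ := hKc.tendsto_subseq hbmem
  have haax : Filter.Tendsto aa Filter.atTop (nhds x) := by
    rw [tendsto_iff_dist_tendsto_zero]
    refine squeeze_zero (fun n => dist_nonneg) (fun n => le_of_lt (haa n)) ?_
    exact tendsto_one_div_add_atTop_nhds_zero_nat
  have haaφ : Filter.Tendsto (aa ∘ φ) Filter.atTop (nhds x) :=
    haax.comp hφ.tendsto_atTop
  have hbsmm : bs ∈ mm l p X x := by
    refine ⟨hbsK.1, fun cp hcp => ?_⟩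
    have hlhs : Filter.Tendsto (fun n => Q l p (bb (φ n) - aa (φ n))) Filter.atTop
        (nhds (Q l p (bs - x))) :=
      (continuous_Q.tendsto _).comp (hconv.sub haaφ)
    have hrhs : Filter.Tendsto (fun n => Q l p (cp - aa (φ n))) Filter.atTop
        (nhds (Q l p (cp - x))) :=
      (continuous_Q.tendsto _).comp (tendsto_const_nhds.sub haaφ)
    exact le_of_tendsto_of_tendsto' hlhs hrhs fun n => (hbb (φ n)).2 cp hcp
  have hbsy : bs = y := by rw [hxy] at hbsmm; exact hbsmm
  have : ε ≤ dist bs y := by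
    have hd : Filter.Tendsto (fun n => dist (bb (φ n)) y) Filter.atTop (nhds (dist bs y)) :=
      (Continuous.tendsto (continuous_id.dist continuous_const) bs).comp hconv
    exact ge_of_tendsto' hd fun n => hby (φ n)
  rw [hbsy, dist_self] at this
  linarith





/-- For nonempty closed `L`-pseudo-Lipschitz `X` with `L < 1` and any
`x ∉ M_X`: `m(x)` is a single point `y`, `ρ(·,X)` is differentiable at `x`, and its derivative
is `h ↦ 2⟪x−y,h⟫`, i.e. its (Euclidean) gradient is `∇ρ(x) = 2A(x−y)`. -/
theorem rho_differentiable_off_medialAxis (l p : ℕ) (hl : 1 ≤ l) (L : ℝ) (hL : L < 1)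
    (X : Set (PE l p)) (hne : X.Nonempty) (hX : IsClosed X)
    (hlip : PseudoLipschitz l p L X) :
    ∀ x ∉ medialAxis l p X, ∃ y : PE l p, mm l p X x = {y} ∧
      HasGradientAt (rho l p X) ((2 : ℝ) • Amap l p (x - y)) x ∧
      ∀ h : PE l p, inner ℝ ((2 : ℝ) • Amap l p (x - y)) h = 2 * pseudoInner l p (x - y) h := by
  intro x hx
  set M := max L 0 with hMdef
  have hM1 : M < 1 := max_lt hL one_pos
  have hM0 : 0 ≤ M := le_max_right _ _
  set c := (1 - M^2)/(1 + M^2) with hcdef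
  have hc : 0 < c := div_pos (by nlinarith) (by positivity)
  have hco : ∀ u ∈ X, ∀ v ∈ X, c * ‖u - v‖^2 ≤ Q l p (u - v) :=
    fun u hu v hv => Q_coercive hlip hL hu hv
  obtain ⟨y, hy⟩ := mm_nonempty hc hne hX hco x
  have hyX : y ∈ X := hy.1
  have hxy : mm l p X x = {y} := by
    ext b
    constructor
    · intro hb
      by_contra hby
      exact hx ⟨b, hb, y, hy, hby⟩
    · intro hb
      rw [Set.mem_singleton_iff] at hb
      exact hb ▸ hy
  have hinner : ∀ h : PE l p,
      (inner ℝ ((2:ℝ) • Amap l p (x - y)) h : ℝ) = 2 * pseudoInner l p (x - y) h := by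
    intro h
    rw [real_inner_smul_left, inner_Amap]
  refine ⟨y, hxy, ?_, hinner⟩
  rw [hasGradientAt_iff_isLittleO, Asymptotics.isLittleO_iff]
  intro C hC
  obtain ⟨δ, hδ, hδprop⟩ := mm_continuity hc hX hco hxy (C/4) (by linarith)
  have hδ'0 : 0 < min δ (C/4) := lt_min hδ (by linarith)
  filter_upwards [Metric.ball_mem_nhds x hδ'0] with a ha
  rw [Metric.mem_ball] at ha
  obtain ⟨ya, hya⟩ := mm_nonempty hc hne hX hco a
  have hrhoa : rho l p X a = Q l p (ya - a) := rho_eq_of_mem_mm hya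
  have hrhox : rho l p X x = Q l p (y - x) := rho_eq_of_mem_mm hy
  have hnax : ‖a - x‖ ≤ C/4 := by
    rw [← dist_eq_norm]
    exact le_of_lt (lt_of_lt_of_le ha (min_le_right _ _))
  have hyay : ‖ya - y‖ ≤ C/4 := by
    have := hδprop a (lt_of_lt_of_le ha (min_le_left _ _)) ya hya
    rw [dist_eq_norm] at this
    linarith
  -- upper bound
  have hpI1 : pseudoInner l p (y - x) (x - a) = pseudoInner l p (x - y) (a - x) := by
    rw [show y - x = -(x - y) by abel, show x - a = -(a - x) by abel, pI_neg_neg]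
  have hub : rho l p X a - rho l p X x - 2 * pseudoInner l p (x - y) (a - x) ≤ ‖a - x‖^2 := by
    have h1 : rho l p X a ≤ Q l p (y - a) := hrhoa ▸ hya.2 y hyX
    have h2 : Q l p (y - a) = Q l p (y - x) + 2 * pseudoInner l p (y - x) (x - a)
        + Q l p (x - a) := by rw [show y - a = (y - x) + (x - a) by abel, Q_add]
    have h3 : Q l p (x - a) ≤ ‖a - x‖^2 := by
      rw [norm_sub_rev]; exact Q_le_norm_sq _
    rw [hrhox]
    rw [h2, hpI1] at h1
    linarith
  -- lower bound
  have hlb : -(‖a - x‖^2 + 2 * (‖ya - y‖ * ‖a - x‖)) ≤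
      rho l p X a - rho l p X x - 2 * pseudoInner l p (x - y) (a - x) := by
    have h1 : rho l p X x ≤ Q l p (ya - x) := hrhox ▸ hy.2 ya hya.1
    have h2 : Q l p (ya - x) = Q l p (ya - a) + 2 * pseudoInner l p (ya - a) (a - x)
        + Q l p (a - x) := by rw [show ya - x = (ya - a) + (a - x) by abel, Q_add]
    have hcomb : pseudoInner l p (ya - a) (a - x) + pseudoInner l p (x - y) (a - x)
        = pseudoInner l p (ya - y) (a - x) - Q l p (a - x) := by
      rw [← pI_add_left, show (ya - a) + (x - y) = (ya - y) - (a - x) by abel,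
        pI_sub_left, pI_self]
    have h3 : -‖a - x‖^2 ≤ Q l p (a - x) := neg_norm_sq_le_Q _
    have h4 : pseudoInner l p (ya - y) (a - x) ≤ ‖ya - y‖ * ‖a - x‖ :=
      le_trans (le_abs_self _) (abs_pseudoInner_le _ _)
    rw [h2, ← hrhoa] at h1
    nlinarith [hcomb]
  rw [hinner (a - x), Real.norm_eq_abs, abs_le]
  have hn0 : (0:ℝ) ≤ ‖a - x‖ := norm_nonneg _
  constructor
  · nlinarith
  · nlinarith
end
end

section
/- Let X be a nonempty closed L-pseudo-Lipschitz subset of the pseudo-Euclidean space ℝ_{(l,p)} with L < 1. Then on ℝ^n \ M_X the set m(x) consists of a single point, and the map ℝ^n \ M_X ∋ x ↦ (the unique element of m(x)) ∈ X is continuous; consequently x ↦ 2A(x − m(x)) = ∇ρ(x) is continuous on ℝ^n \ M_X, where A = diag(1,…,1,−1,…,−1) with l entries 1 and p entries −1. -/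
open Filter Topology Set

noncomputable section

section Helpers

variable {l p : ℕ}

lemma normL_nonneg (x : PE l p) : 0 ≤ normL l p x := Real.sqrt_nonneg _
lemma normP_nonneg (x : PE l p) : 0 ≤ normP l p x := Real.sqrt_nonneg _

lemma normL_sq (x : PE l p) :
    (normL l p x) ^ 2 = ∑ i : Fin (l + p), if (i : ℕ) < l then (x i) ^ 2 else 0 :=
  Real.sq_sqrt (Finset.sum_nonneg fun i _ => by split_ifs <;> positivity)

lemma normP_sq (x : PE l p) :
    (normP l p x) ^ 2 = ∑ i : Fin (l + p), if (i : ℕ) < l then 0 else (x i) ^ 2 :=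
  Real.sq_sqrt (Finset.sum_nonneg fun i _ => by split_ifs <;> positivity)

lemma Q_eq (x : PE l p) : Q l p x = (normL l p x) ^ 2 - (normP l p x) ^ 2 := by
  rw [normL_sq, normP_sq, ← Finset.sum_sub_distrib]
  exact Finset.sum_congr rfl fun i _ => by split_ifs <;> ring

lemma norm_sq_eq (x : PE l p) : ‖x‖ ^ 2 = (normL l p x) ^ 2 + (normP l p x) ^ 2 := by
  rw [normL_sq, normP_sq, ← Finset.sum_add_distrib, EuclideanSpace.norm_eq,
    Real.sq_sqrt (Finset.sum_nonneg fun i _ => by positivity)]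
  exact Finset.sum_congr rfl fun i _ => by split_ifs <;> simp [Real.norm_eq_abs, sq_abs]

def piL (l p : ℕ) : PE l p →ₗ[ℝ] PE l p where
  toFun x := (WithLp.equiv 2 (Fin (l + p) → ℝ)).symm fun i => if (i : ℕ) < l then x i else 0
  map_add' x y := by
    ext i; by_cases h : (i : ℕ) < l <;>
      simp [WithLp.equiv_symm_apply, h, PiLp.add_apply]
  map_smul' c x := by
    ext i; by_cases h : (i : ℕ) < l <;>
      simp [WithLp.equiv_symm_apply, h, PiLp.smul_apply, smul_eq_mul]

def piP (l p : ℕ) : PE l p →ₗ[ℝ] PE l p where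
  toFun x := (WithLp.equiv 2 (Fin (l + p) → ℝ)).symm fun i => if (i : ℕ) < l then 0 else x i
  map_add' x y := by
    ext i; by_cases h : (i : ℕ) < l <;>
      simp [WithLp.equiv_symm_apply, h, PiLp.add_apply]
  map_smul' c x := by
    ext i; by_cases h : (i : ℕ) < l <;>
      simp [WithLp.equiv_symm_apply, h, PiLp.smul_apply, smul_eq_mul]

lemma normL_eq_norm (x : PE l p) : normL l p x = ‖piL l p x‖ := by
  rw [EuclideanSpace.norm_eq]
  unfold normL
  congr 1
  refine Finset.sum_congr rfl fun i _ => ?_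
  show _ = ‖((WithLp.equiv 2 (Fin (l + p) → ℝ)).symm fun j => if (j : ℕ) < l then x j else 0) i‖ ^ 2
  rw [WithLp.equiv_symm_apply, WithLp.ofLp_toLp]
  split_ifs with h <;> simp [Real.norm_eq_abs, sq_abs, h]

lemma normP_eq_norm (x : PE l p) : normP l p x = ‖piP l p x‖ := by
  rw [EuclideanSpace.norm_eq]
  unfold normP
  congr 1
  refine Finset.sum_congr rfl fun i _ => ?_
  show _ = ‖((WithLp.equiv 2 (Fin (l + p) → ℝ)).symm fun j => if (j : ℕ) < l then 0 else x j) i‖ ^ 2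
  rw [WithLp.equiv_symm_apply, WithLp.ofLp_toLp]
  split_ifs with h <;> simp [Real.norm_eq_abs, sq_abs, h]

lemma normL_add_le (x y : PE l p) : normL l p (x + y) ≤ normL l p x + normL l p y := by
  rw [normL_eq_norm, normL_eq_norm, normL_eq_norm, map_add]; exact norm_add_le _ _

lemma normP_add_le (x y : PE l p) : normP l p (x + y) ≤ normP l p x + normP l p y := by
  rw [normP_eq_norm, normP_eq_norm, normP_eq_norm, map_add]; exact norm_add_le _ _

lemma normL_neg (x : PE l p) : normL l p (-x) = normL l p x := by
  rw [normL_eq_norm, normL_eq_norm, map_neg, norm_neg]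

lemma normP_neg (x : PE l p) : normP l p (-x) = normP l p x := by
  rw [normP_eq_norm, normP_eq_norm, map_neg, norm_neg]

lemma normL_le_norm (x : PE l p) : normL l p x ≤ ‖x‖ := by
  have h := norm_sq_eq x
  nlinarith [normL_nonneg x, normP_nonneg x, norm_nonneg x, sq_nonneg (normP l p x)]

lemma normP_le_norm (x : PE l p) : normP l p x ≤ ‖x‖ := by
  have h := norm_sq_eq x
  nlinarith [normL_nonneg x, normP_nonneg x, norm_nonneg x, sq_nonneg (normL l p x)]

lemma continuous_Amap : Continuous (Amap l p) := by
  unfold Amap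
  refine (PiLp.continuous_toLp 2 (fun _ : Fin (l + p) => ℝ)).comp
    (continuous_pi fun i => ?_)
  by_cases h : (i : ℕ) < l <;> simp only [h, if_true, if_false]
  · exact (EuclideanSpace.proj (𝕜 := ℝ) i).continuous
  · exact (EuclideanSpace.proj (𝕜 := ℝ) i).continuous.neg

lemma alg_bound {L' c tl tp MM : ℝ} (hL0 : 0 ≤ L') (hL1 : L' < 1) (hc : 0 ≤ c)
    (htl : 0 ≤ tl) (htp : 0 ≤ tp) (hMM : 0 ≤ MM)
    (hQ : tl ^ 2 - tp ^ 2 ≤ MM) (hlip : tp ≤ L' * tl + c) :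
    (1 - L' ^ 2) ^ 2 * (tl ^ 2 + tp ^ 2) ≤ 6 * MM + 20 * c ^ 2 := by
  have e1 : (0:ℝ) < 1 - L' ^ 2 := by nlinarith
  have e2 : 1 - L' ^ 2 ≤ 1 := by nlinarith
  have h1 : (1 - L' ^ 2) * tl ^ 2 ≤ MM + 2 * L' * c * tl + c ^ 2 := by nlinarith
  have h2 : (1 - L' ^ 2) ^ 2 * tl ^ 2 ≤ 2 * MM + 6 * c ^ 2 := by
    nlinarith [sq_nonneg ((1 - L' ^ 2) * tl - 2 * L' * c), mul_le_of_le_one_left hMM e2,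
      mul_le_of_le_one_left (sq_nonneg c) e2, sq_nonneg (L' * c), mul_pos e1 e1,
      mul_nonneg (mul_nonneg hL0 hc) htl]
  have hL'tl : L' * tl ≤ tl := mul_le_of_le_one_left htl hL1.le
  have h3 : tp ^ 2 ≤ 2 * tl ^ 2 + 2 * c ^ 2 := by nlinarith [sq_nonneg (tl - c)]
  have h4 : (1 - L' ^ 2) ^ 2 * tp ^ 2 ≤ (1 - L' ^ 2) ^ 2 * (2 * tl ^ 2 + 2 * c ^ 2) :=
    mul_le_mul_of_nonneg_left h3 (by positivity)
  have e3 : (1 - L' ^ 2) ^ 2 ≤ 1 := by nlinarith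
  have h5 : (1 - L' ^ 2) ^ 2 * (2 * c ^ 2) ≤ 2 * c ^ 2 := by
    nlinarith [mul_le_mul_of_nonneg_right e3 (by positivity : (0:ℝ) ≤ 2 * c ^ 2)]
  nlinarith

end Helpers

/-- For nonempty closed `L`-pseudo-Lipschitz `X` with `L < 1`: on `ℝ^n \ M_X`
the set `m(x)` is a singleton, and any selection `f` of `m` is continuous on `ℝ^n \ M_X`;
consequently `x ↦ 2A(x − f x) = ∇ρ(x)` is continuous on `ℝ^n \ M_X`. -/
theorem m_singleton_and_continuous_off_medialAxis (l p : ℕ) (hl : 1 ≤ l) (L : ℝ) (hL : L < 1)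
    (X : Set (PE l p)) (hne : X.Nonempty) (hX : IsClosed X)
    (hlip : PseudoLipschitz l p L X) :
    (∀ x ∉ medialAxis l p X, ∃ y : PE l p, mm l p X x = {y}) ∧
    (∀ f : PE l p → PE l p, (∀ x ∉ medialAxis l p X, mm l p X x = {f x}) →
      (∀ x ∈ (medialAxis l p X)ᶜ, f x ∈ X) ∧
      ContinuousOn f (medialAxis l p X)ᶜ ∧
      ContinuousOn (fun x => (2 : ℝ) • Amap l p (x - f x)) (medialAxis l p X)ᶜ) := by
  classical
  obtain ⟨x₀, hx₀⟩ := hne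
  set L' : ℝ := max L 0 with hL'def
  have hL'0 : 0 ≤ L' := le_max_right _ _
  have hL'1 : L' < 1 := max_lt hL zero_lt_one
  have hlip' : ∀ x ∈ X, ∀ y ∈ X, normP l p (x - y) ≤ L' * normL l p (x - y) := fun x hx y hy =>
    (hlip x hx y hy).trans (mul_le_mul_of_nonneg_right (le_max_left _ _) (normL_nonneg _))
  set cc : PE l p → ℝ := fun z => L' * normL l p (x₀ - z) + normP l p (x₀ - z) with hcc
  have hcc0 : ∀ z, 0 ≤ cc z := fun z =>
    add_nonneg (mul_nonneg hL'0 (normL_nonneg _)) (normP_nonneg _)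
  -- the key pseudo-Lipschitz estimate
  have key : ∀ z : PE l p, ∀ y ∈ X, normP l p (y - z) ≤ L' * normL l p (y - z) + cc z := by
    intro z y hy
    have h1 : y - z = (y - x₀) + (x₀ - z) := by abel
    have step1 : normP l p (y - z) ≤ normP l p (y - x₀) + normP l p (x₀ - z) := by
      rw [h1]; exact normP_add_le _ _
    have step2 : normP l p (y - x₀) ≤ L' * normL l p (y - x₀) := hlip' y hy x₀ hx₀
    have h2 : y - x₀ = (y - z) + (z - x₀) := by abel
    have step3 : normL l p (y - x₀) ≤ normL l p (y - z) + normL l p (x₀ - z) := by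
      rw [h2]
      refine (normL_add_le _ _).trans ?_
      rw [show z - x₀ = -(x₀ - z) by abel, normL_neg]
    have step4 : L' * normL l p (y - x₀) ≤ L' * (normL l p (y - z) + normL l p (x₀ - z)) :=
      mul_le_mul_of_nonneg_left step3 hL'0
    simp only [hcc]
    nlinarith
  -- coercivity bound
  have bound : ∀ z : PE l p, ∀ M : ℝ, ∀ y ∈ X, Q l p (y - z) ≤ M →
      ‖y - z‖ ^ 2 ≤ (6 * max M 0 + 20 * (cc z) ^ 2) / (1 - L' ^ 2) ^ 2 := by
    intro z M y hy hQy
    have halg := alg_bound hL'0 hL'1 (hcc0 z) (normL_nonneg (y - z)) (normP_nonneg (y - z))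
      (le_max_right M 0)
      (by rw [← Q_eq]; exact hQy.trans (le_max_left _ _)) (key z y hy)
    have e0 : (0:ℝ) < 1 - L' ^ 2 := by nlinarith
    have e1 : (0:ℝ) < (1 - L' ^ 2) ^ 2 := pow_pos e0 2
    rw [le_div_iff₀ e1]
    rw [norm_sq_eq]
    nlinarith
  -- existence of closest points
  have hmmne : ∀ a : PE l p, (mm l p X a).Nonempty := by
    intro a
    set g : PE l p → ℝ := fun y => Q l p (y - a) with hg
    have hgcont : Continuous g := continuous_Q.comp (continuous_id.sub continuous_const)
    set S : Set (PE l p) := X ∩ {y | g y ≤ g x₀} with hS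
    have hSclosed : IsClosed S := hX.inter (isClosed_le hgcont continuous_const)
    set B : ℝ := (6 * max (g x₀) 0 + 20 * (cc a) ^ 2) / (1 - L' ^ 2) ^ 2 with hB
    have hSsub : S ⊆ Metric.closedBall a (Real.sqrt B) := by
      intro y hy
      have hb := bound a (g x₀) y hy.1 hy.2
      rw [Metric.mem_closedBall, dist_eq_norm]
      rw [← Real.sqrt_sq (norm_nonneg (y - a))]
      exact Real.sqrt_le_sqrt hb
    have hScompact : IsCompact S :=
      (isCompact_closedBall a (Real.sqrt B)).of_isClosed_subset hSclosed hSsub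
    obtain ⟨y, hyS, hymin⟩ :=
      hScompact.exists_isMinOn ⟨x₀, hx₀, show g x₀ ≤ g x₀ from le_rfl⟩ hgcont.continuousOn
    refine ⟨y, hyS.1, fun b hb => ?_⟩
    by_cases hbS : g b ≤ g x₀
    · exact isMinOn_iff.mp hymin b ⟨hb, hbS⟩
    · have h1 : g y ≤ g x₀ := hyS.2
      have h2 : g x₀ ≤ g b := (not_le.mp hbS).le
      exact h1.trans h2
  have part1 : ∀ x ∉ medialAxis l p X, ∃ y : PE l p, mm l p X x = {y} := by
    intro x hx
    obtain ⟨y, hy⟩ := hmmne x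
    exact ⟨y, (Set.not_nontrivial_iff.mp hx).eq_singleton_of_mem hy⟩
  refine ⟨part1, ?_⟩
  intro f hf
  have hfmm : ∀ x ∈ (medialAxis l p X)ᶜ, f x ∈ mm l p X x := by
    intro x hx
    rw [hf x hx]
    exact rfl
  have hfX : ∀ x ∈ (medialAxis l p X)ᶜ, f x ∈ X := fun x hx => (hfmm x hx).1
  have hfcont : ContinuousOn f (medialAxis l p X)ᶜ := by
    intro x hxU
    -- uniform bound on minimizers for points near x
    set D : ℝ := ‖x₀ - x‖ + 1 with hD
    have hD0 : 0 < D := by positivity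
    set e : ℝ := (1 - L' ^ 2) ^ 2 with he'
    have he0 : (0:ℝ) < 1 - L' ^ 2 := by nlinarith
    have he : 0 < e := pow_pos he0 2
    set R : ℝ := Real.sqrt (86 * D ^ 2 / e) + 1 with hRdef
    have hR : ∀ z : PE l p, ‖z - x‖ ≤ 1 → ∀ y ∈ mm l p X z, ‖y - x‖ ≤ R := by
      intro z hz y hy
      have hx₀z : ‖x₀ - z‖ ≤ D := by
        have h1 : x₀ - z = (x₀ - x) + (x - z) := by abel
        have h2 : ‖x₀ - z‖ ≤ ‖x₀ - x‖ + ‖x - z‖ := by rw [h1]; exact norm_add_le _ _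
        have h3 : ‖x - z‖ = ‖z - x‖ := by rw [show x - z = -(z - x) by abel, norm_neg]
        rw [hD]; rw [h3] at h2; linarith
      have hQy : Q l p (y - z) ≤ Q l p (x₀ - z) := hy.2 x₀ hx₀
      have hM : Q l p (x₀ - z) ≤ D ^ 2 := by
        rw [Q_eq]
        have h1 := (normL_le_norm (x₀ - z)).trans hx₀z
        nlinarith [normP_nonneg (x₀ - z), normL_nonneg (x₀ - z), sq_nonneg (normP l p (x₀ - z))]
      have hb := bound z (D ^ 2) y hy.1 (hQy.trans hM)
      have hcz : cc z ≤ 2 * D := by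
        have h1 := (normL_le_norm (x₀ - z)).trans hx₀z
        have h2 := (normP_le_norm (x₀ - z)).trans hx₀z
        have h3 : L' * normL l p (x₀ - z) ≤ normL l p (x₀ - z) :=
          mul_le_of_le_one_left (normL_nonneg _) hL'1.le
        simp only [hcc]
        linarith
      have hnum : 6 * max (D ^ 2) 0 + 20 * (cc z) ^ 2 ≤ 86 * D ^ 2 := by
        rw [max_eq_left (by positivity : (0:ℝ) ≤ D ^ 2)]
        nlinarith [hcc0 z, hcz]
      have hb2 : ‖y - z‖ ^ 2 ≤ 86 * D ^ 2 / e := by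
        refine hb.trans ?_
        exact (div_le_div_iff_of_pos_right he).mpr hnum
      have hyz : ‖y - z‖ ≤ Real.sqrt (86 * D ^ 2 / e) := by
        rw [← Real.sqrt_sq (norm_nonneg (y - z))]
        exact Real.sqrt_le_sqrt hb2
      have htri : ‖y - x‖ ≤ ‖y - z‖ + ‖z - x‖ := by
        rw [show y - x = (y - z) + (z - x) by abel]; exact norm_add_le _ _
      rw [hRdef]; linarith
    -- sequential continuity
    show ContinuousWithinAt f (medialAxis l p X)ᶜ x
    have hK : IsCompact (X ∩ Metric.closedBall x R) :=
      (isCompact_closedBall x R).inter_left hX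
    apply tendsto_of_subseq_tendsto
    intro ns hns
    have hns_nhds : Tendsto ns atTop (𝓝 x) := hns.mono_right nhdsWithin_le_nhds
    have hU' : ∀ᶠ n in atTop, ns n ∈ (medialAxis l p X)ᶜ := hns self_mem_nhdsWithin
    have hball : ∀ᶠ n in atTop, ‖ns n - x‖ ≤ 1 := by
      filter_upwards [hns_nhds (Metric.closedBall_mem_nhds x one_pos)] with n hn
      simp only [Set.mem_preimage, Metric.mem_closedBall, dist_eq_norm] at hn
      exact hn
    have hmem : ∀ᶠ n in atTop, f (ns n) ∈ X ∩ Metric.closedBall x R := by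
      filter_upwards [hU', hball] with n h1 h2
      have hfm : f (ns n) ∈ mm l p X (ns n) := hfmm _ h1
      exact ⟨hfm.1, by rw [Metric.mem_closedBall, dist_eq_norm]; exact hR _ h2 _ hfm⟩
    obtain ⟨b, hbK, φ, hφ, hbtend⟩ := hK.tendsto_subseq' hmem.frequently
    refine ⟨φ, ?_⟩
    have hnsφ : Tendsto (fun n => ns (φ n)) atTop (𝓝 x) := hns_nhds.comp hφ.tendsto_atTop
    have hb_mm : b ∈ mm l p X x := by
      refine ⟨hbK.1, fun a ha => ?_⟩
      have hle : ∀ᶠ n in atTop,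
          Q l p (f (ns (φ n)) - ns (φ n)) ≤ Q l p (a - ns (φ n)) := by
        filter_upwards [hφ.tendsto_atTop.eventually hU'] with n h1
        exact (hfmm _ h1).2 a ha
      have t1 : Tendsto (fun n => Q l p (f (ns (φ n)) - ns (φ n))) atTop
          (𝓝 (Q l p (b - x))) :=
        (continuous_Q.tendsto _).comp (hbtend.sub hnsφ)
      have t2 : Tendsto (fun n => Q l p (a - ns (φ n))) atTop (𝓝 (Q l p (a - x))) :=
        (continuous_Q.tendsto _).comp (tendsto_const_nhds.sub hnsφ)
      exact le_of_tendsto_of_tendsto t1 t2 hle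
    have hbfx : b = f x := by
      have h := hf x hxU
      rw [h] at hb_mm
      exact hb_mm
    rw [← hbfx]
    exact hbtend
  refine ⟨hfX, hfcont, ?_⟩
  have h1 : ContinuousOn (fun x => x - f x) (medialAxis l p X)ᶜ :=
    continuousOn_id.sub hfcont
  exact (continuous_Amap.comp_continuousOn h1).const_smul (2 : ℝ)
end
end
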